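/- Let ψ be a vector in H_A ⊗ H_B and, for each u ∈ F_q^m, let A^u be a Hermitian matrix with 0 ≤ A^u ≤ I acting on H_A. Define the local variance Var_local = (1/2)·E_{(u,v)∼C} ⟨ψ| (A^u − A^v)² ⊗ I |ψ⟩ over a random hypercube edge, and the global variance Var_global = (1/2)·E_{u,v∼F_q^m} ⟨ψ| (A^u − A^v)² ⊗ I |ψ⟩ over two independent uniform points. Then Var_global ≤ m · Var_local. -/

import Mathlib

open scoped ComplexOrder

/-- The action of `M ⊗ I` on a vector `ψ` of the bipartite space
`ℂ^{nA} ⊗ ℂ^{nB} ≅ ℂ^{nA × nB}`, where `M` acts on the first factor. -/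
noncomputable def tensorApplyFst {nA nB : ℕ} (M : Matrix (Fin nA) (Fin nA) ℂ)
    (ψ : Fin nA × Fin nB → ℂ) : Fin nA × Fin nB → ℂ :=
  fun p => ∑ a', M p.1 a' * ψ (a', p.2)

/-- The standard inner product `⟨φ|χ⟩` on `ℂ^{nA × nB}` (conjugate-linear in the
first argument). -/
noncomputable def cInner {nA nB : ℕ} (φ χ : Fin nA × Fin nB → ℂ) : ℂ :=
  ∑ p, (starRingEnd ℂ) (φ p) * χ p

set_option linter.unusedSectionVars false

namespace VarAux

variable {m : ℕ} {F : Type*} [Fintype F] [DecidableEq F]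

/-- averaging over coordinate `i` -/
noncomputable def avg (i : Fin m) (f : (Fin m → F) → ℝ) : (Fin m → F) → ℝ :=
  fun u => (∑ c : F, f (Function.update u i c)) / (Fintype.card F)

/-- the swap involution on `(Fin m → F) × F` -/
def swp (i : Fin m) : ((Fin m → F) × F) ≃ ((Fin m → F) × F) where
  toFun p := (Function.update p.1 i p.2, p.1 i)
  invFun p := (Function.update p.1 i p.2, p.1 i)
  left_inv p := by
    simp [Function.update_idem, Function.update_self, Function.update_eq_self]
  right_inv p := by
    simp [Function.update_idem, Function.update_self, Function.update_eq_self]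

/-- averaging preserves total sum (in unnormalized form) -/
lemma sum_update (i : Fin m) (f : (Fin m → F) → ℝ) :
    ∑ u : Fin m → F, ∑ c : F, f (Function.update u i c)
      = (Fintype.card F : ℝ) * ∑ u : Fin m → F, f u := by
  have h := Equiv.sum_comp (swp i) (fun p : (Fin m → F) × F => f p.1)
  simp only [swp, Equiv.coe_fn_mk] at h
  rw [Fintype.sum_prod_type] at h
  rw [h]
  simp [Fintype.sum_prod_type, Finset.sum_const, mul_comm, Finset.mul_sum, Finset.sum_mul]

lemma avg_update (i : Fin m) (f : (Fin m → F) → ℝ) (u : Fin m → F) (c : F) :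
    avg i f (Function.update u i c) = avg i f u := by
  simp [avg, Function.update_idem]

lemma avg_empty (i : Fin m) (f : (Fin m → F) → ℝ) (hq : Fintype.card F = 0) :
    avg i f = fun _ => 0 := by
  funext u; simp [avg, hq]

lemma avg_avg (i : Fin m) (f : (Fin m → F) → ℝ) : avg i (avg i f) = avg i f := by
  rcases Nat.eq_zero_or_pos (Fintype.card F) with h | h
  · rw [avg_empty i f h, avg_empty i _ h]
  funext u
  show (∑ c : F, avg i f (Function.update u i c)) / _ = avg i f u
  rw [Finset.sum_congr rfl (fun c _ => avg_update i f u c)]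
  simp only [Finset.sum_const, Finset.card_univ, nsmul_eq_mul]
  field_simp

lemma avg_comm (i j : Fin m) (f : (Fin m → F) → ℝ) : avg i (avg j f) = avg j (avg i f) := by
  rcases eq_or_ne i j with rfl | hij
  · rfl
  funext u
  show (∑ c : F, avg j f (Function.update u i c)) / _
      = (∑ d : F, avg i f (Function.update u j d)) / _
  simp only [avg, Finset.sum_div]
  rw [Finset.sum_comm]
  congr 1
  ext d
  congr 1
  ext c
  rw [Function.update_comm hij]

lemma avg_sub (i : Fin m) (f g : (Fin m → F) → ℝ) :
    avg i (fun u => f u - g u) = fun u => avg i f u - avg i g u := by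
  funext u
  simp [avg, Finset.sum_sub_distrib, sub_div]

lemma sum_avg_mul_self (i : Fin m) (f : (Fin m → F) → ℝ) :
    ∑ u : Fin m → F, f u * avg i f u = ∑ u : Fin m → F, avg i f u * avg i f u := by
  rcases Nat.eq_zero_or_pos (Fintype.card F) with h | h
  · simp [avg_empty i f h]
  have key := sum_update i (fun u => f u * avg i f u)
  have h2 : ∀ u : Fin m → F, ∑ c : F, f (Function.update u i c) * avg i f (Function.update u i c)
      = (Fintype.card F : ℝ) * (avg i f u * avg i f u) := by
    intro u
    rw [Finset.sum_congr rfl (fun c _ => by rw [avg_update i f u c])]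
    rw [← Finset.sum_mul]
    have : (∑ c : F, f (Function.update u i c)) = (Fintype.card F : ℝ) * avg i f u := by
      rw [avg]
      field_simp
    rw [this]; ring
  rw [Finset.sum_congr rfl (fun u _ => h2 u)] at key
  rw [← Finset.mul_sum] at key
  have hq : (Fintype.card F : ℝ) ≠ 0 := by positivity
  exact (mul_left_cancel₀ hq key).symm

lemma sum_sq_sub_avg (i : Fin m) (f : (Fin m → F) → ℝ) :
    ∑ u : Fin m → F, (f u - avg i f u)^2
      = ∑ u : Fin m → F, (f u)^2 - ∑ u : Fin m → F, (avg i f u)^2 := by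
  have h1 := sum_avg_mul_self i f
  rw [Finset.sum_congr rfl (fun u (_ : u ∈ Finset.univ) =>
    (by ring : (f u - avg i f u)^2
      = (f u)^2 - 2 * (f u * avg i f u) + (avg i f u * avg i f u)))]
  rw [Finset.sum_add_distrib, Finset.sum_sub_distrib, ← Finset.mul_sum, h1]
  rw [Finset.sum_congr rfl (fun u (_ : u ∈ Finset.univ) => (sq (avg i f u)).symm)]
  ring

/-- contraction: averaging does not increase the sum of squares -/
lemma sum_avg_sq_le (i : Fin m) (f : (Fin m → F) → ℝ) :
    ∑ u : Fin m → F, (avg i f u)^2 ≤ ∑ u : Fin m → F, (f u)^2 := by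
  rcases Nat.eq_zero_or_pos (Fintype.card F) with h | h
  · simp [avg_empty i f h]
    positivity
  have hq : (0:ℝ) < (Fintype.card F : ℝ) := by exact_mod_cast h
  have pointwise : ∀ u : Fin m → F,
      (avg i f u)^2 ≤ (∑ c : F, (f (Function.update u i c))^2) / (Fintype.card F : ℝ) := by
    intro u
    rw [avg, div_pow, div_le_div_iff₀ (by positivity) hq]
    have := sq_sum_le_card_mul_sum_sq (s := (Finset.univ : Finset F))
      (f := fun c => f (Function.update u i c))
    simp only [Finset.card_univ] at this
    calc (∑ c : F, f (Function.update u i c)) ^ 2 * (Fintype.card F : ℝ)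
        ≤ ((Fintype.card F : ℝ) * ∑ c : F, (f (Function.update u i c))^2)
            * (Fintype.card F : ℝ) := by
          exact mul_le_mul_of_nonneg_right this hq.le
      _ = (∑ c : F, (f (Function.update u i c))^2) * (Fintype.card F : ℝ)^2 := by ring
  calc ∑ u : Fin m → F, (avg i f u)^2
      ≤ ∑ u : Fin m → F, (∑ c : F, (f (Function.update u i c))^2) / (Fintype.card F : ℝ) :=
        Finset.sum_le_sum (fun u _ => pointwise u)
    _ = (∑ u : Fin m → F, ∑ c : F, (f (Function.update u i c))^2) / (Fintype.card F : ℝ) := by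
        rw [Finset.sum_div]
    _ = ∑ u : Fin m → F, (f u)^2 := by
        rw [sum_update i (fun u => (f u)^2)]
        field_simp

end VarAux

namespace VarAux

variable {m : ℕ} {F : Type*} [Fintype F] [DecidableEq F]

/-- iterated averaging over a list of coordinates -/
noncomputable def avgL : List (Fin m) → ((Fin m → F) → ℝ) → ((Fin m → F) → ℝ)
  | [], f => f
  | i :: L, f => avg i (avgL L f)

lemma avgL_avg (L : List (Fin m)) (i : Fin m) (f : (Fin m → F) → ℝ) :
    avgL L (avg i f) = avg i (avgL L f) := by
  induction L with
  | nil => rfl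
  | cons j L ih => simp only [avgL, ih, avg_comm]

lemma avgL_sub (L : List (Fin m)) (f g : (Fin m → F) → ℝ) :
    avgL L (fun u => f u - g u) = fun u => avgL L f u - avgL L g u := by
  induction L with
  | nil => rfl
  | cons j L ih => simp only [avgL, ih, avg_sub]

lemma sum_avgL_sq_le (L : List (Fin m)) (f : (Fin m → F) → ℝ) :
    ∑ u : Fin m → F, (avgL L f u)^2 ≤ ∑ u : Fin m → F, (f u)^2 := by
  induction L with
  | nil => exact le_rfl
  | cons j L ih => exact le_trans (sum_avg_sq_le j (avgL L f)) ih

lemma sum_avgL (L : List (Fin m)) (f : (Fin m → F) → ℝ) (hq : 0 < Fintype.card F) :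
    ∑ u : Fin m → F, avgL L f u = ∑ u : Fin m → F, f u := by
  induction L with
  | nil => rfl
  | cons j L ih =>
    show ∑ u : Fin m → F, avg j (avgL L f) u = _
    rw [← ih]
    have hqr : (Fintype.card F : ℝ) ≠ 0 := by positivity
    simp only [avg, ← Finset.sum_div, sum_update j (avgL L f)]
    field_simp

/-- telescoping inequality -/
lemma telescope (L : List (Fin m)) (h : (Fin m → F) → ℝ) :
    ∑ u : Fin m → F, (h u)^2 - ∑ u : Fin m → F, (avgL L h u)^2
      ≤ (L.map (fun i => ∑ u : Fin m → F, (h u)^2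
          - ∑ u : Fin m → F, (avg i h u)^2)).sum := by
  induction L with
  | nil => simp [avgL]
  | cons i L ih =>
    simp only [List.map_cons, List.sum_cons]
    have step : ∑ u : Fin m → F, (avgL L h u)^2 - ∑ u : Fin m → F, (avgL (i :: L) h u)^2
        ≤ ∑ u : Fin m → F, (h u)^2 - ∑ u : Fin m → F, (avg i h u)^2 := by
      have e1 : ∑ u : Fin m → F, (avgL L h u)^2 - ∑ u : Fin m → F, (avgL (i :: L) h u)^2
          = ∑ u : Fin m → F, (avgL L h u - avg i (avgL L h) u)^2 :=
        (sum_sq_sub_avg i (avgL L h)).symm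
      have e2 : (fun u => avgL L h u - avg i (avgL L h) u)
          = avgL L (fun u => h u - avg i h u) := by
        rw [avgL_sub, avgL_avg]
      have e3 : ∑ u : Fin m → F, (avgL L h u - avg i (avgL L h) u)^2
          ≤ ∑ u : Fin m → F, (h u - avg i h u)^2 := by
        calc ∑ u : Fin m → F, (avgL L h u - avg i (avgL L h) u)^2
            = ∑ u : Fin m → F, (avgL L (fun u => h u - avg i h u) u)^2 := by
              refine Finset.sum_congr rfl (fun u _ => ?_)
              rw [← e2]
          _ ≤ _ := sum_avgL_sq_le L _
      rw [e1]
      calc ∑ u : Fin m → F, (avgL L h u - avg i (avgL L h) u)^2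
          ≤ ∑ u : Fin m → F, (h u - avg i h u)^2 := e3
        _ = _ := sum_sq_sub_avg i h
    linarith

/-- invariance under update at coordinate `i` -/
def Inv (g : (Fin m → F) → ℝ) (i : Fin m) : Prop :=
  ∀ u c, g (Function.update u i c) = g u

lemma inv_avg_self (i : Fin m) (f : (Fin m → F) → ℝ) : Inv (avg i f) i :=
  fun u c => avg_update i f u c

lemma inv_avg (i j : Fin m) (f : (Fin m → F) → ℝ) (hf : Inv f i) : Inv (avg j f) i := by
  rcases eq_or_ne j i with rfl | hij
  · exact inv_avg_self j f
  intro u c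
  simp only [avg]
  congr 1
  refine Finset.sum_congr rfl (fun d _ => ?_)
  rw [Function.update_comm (Ne.symm hij), hf]

lemma inv_avgL (L : List (Fin m)) (i : Fin m) (hi : i ∈ L) (f : (Fin m → F) → ℝ) :
    Inv (avgL L f) i := by
  induction L with
  | nil => cases hi
  | cons j L ih =>
    rcases List.mem_cons.mp hi with rfl | hi'
    · exact inv_avg_self i (avgL L f)
    · exact inv_avg i j (avgL L f) (ih hi')

lemma avgL_const (h : (Fin m → F) → ℝ) (u v : Fin m → F) :
    avgL (List.finRange m) h u = avgL (List.finRange m) h v := by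
  set g := avgL (List.finRange m) h with hg
  have hinv : ∀ i : Fin m, Inv g i := fun i =>
    inv_avgL (List.finRange m) i (List.mem_finRange i) h
  have main : ∀ s : Finset (Fin m), g (s.piecewise v u) = g u := by
    intro s
    induction s using Finset.induction with
    | empty => rw [Finset.piecewise_empty]
    | insert _ _ hj ih =>
      rw [Finset.piecewise_insert]
      rw [hinv _ _ _, ih]
  have := main Finset.univ
  rw [Finset.piecewise_univ] at this
  exact this.symm

/-- the sharp Poincaré inequality, normalized form -/
lemma key_normalized (h : (Fin m → F) → ℝ) (hq : 0 < Fintype.card F) :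
    ∑ u : Fin m → F, (h u)^2
        - (∑ u : Fin m → F, h u)^2 / (Fintype.card (Fin m → F) : ℝ)
      ≤ ∑ i : Fin m, (∑ u : Fin m → F, (h u)^2 - ∑ u : Fin m → F, (avg i h u)^2) := by
  have hN : (0:ℝ) < (Fintype.card (Fin m → F) : ℝ) := by
    have : 0 < Fintype.card (Fin m → F) := Fintype.card_pos_iff.mpr
      ⟨fun _ => Classical.choice (Fintype.card_pos_iff.mp hq)⟩
    exact_mod_cast this
  set L : List (Fin m) := List.finRange m with hL
  have t := telescope L h
  have cs : ∑ u : Fin m → F, (avgL L h u)^2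
      = (∑ u : Fin m → F, h u)^2 / (Fintype.card (Fin m → F) : ℝ) := by
    rw [← sum_avgL L h hq]
    obtain ⟨w⟩ : Nonempty (Fin m → F) := Fintype.card_pos_iff.mp (by exact_mod_cast hN)
    have hc : ∀ u : Fin m → F, avgL L h u = avgL L h w := fun u => avgL_const h u w
    rw [Finset.sum_congr rfl (fun u _ => hc u),
      Finset.sum_congr rfl (fun u (_ : u ∈ Finset.univ) => by
        rw [hc u] : ∀ u ∈ Finset.univ, (avgL L h u)^2 = (avgL L h w)^2)]
    simp only [Finset.sum_const, Finset.card_univ, nsmul_eq_mul]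
    field_simp
  have hs : (L.map (fun i => ∑ u : Fin m → F, (h u)^2
      - ∑ u : Fin m → F, (avg i h u)^2)).sum
      = ∑ i : Fin m, (∑ u : Fin m → F, (h u)^2 - ∑ u : Fin m → F, (avg i h u)^2) := by
    rw [hL, ← Fin.sum_univ_def]
  linarith

end VarAux

namespace VarAux

variable {m : ℕ} {F : Type*} [Fintype F] [DecidableEq F]

lemma sum_edge [AddGroup F] (i : Fin m) (h : (Fin m → F) → ℝ) (u : Fin m → F) :
    ∑ x : F, (h u - h (Function.update u i (u i + x)))^2
      = ∑ c : F, (h u - h (Function.update u i c))^2 :=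
  Equiv.sum_comp (Equiv.addLeft (u i)) (fun c => (h u - h (Function.update u i c))^2)

lemma sum_edge_total (i : Fin m) (h : (Fin m → F) → ℝ) :
    ∑ u : Fin m → F, ∑ c : F, (h u - h (Function.update u i c))^2
      = 2 * (Fintype.card F : ℝ) *
          (∑ u : Fin m → F, (h u)^2 - ∑ u : Fin m → F, (avg i h u)^2) := by
  rcases Nat.eq_zero_or_pos (Fintype.card F) with hq | hq
  · simp [hq, avg_empty i h hq, Finset.univ_eq_empty_iff.mpr (Fintype.card_eq_zero_iff.mp hq)]
  have hqr : (Fintype.card F : ℝ) ≠ 0 := by positivity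
  have expand : ∀ u : Fin m → F, ∑ c : F, (h u - h (Function.update u i c))^2
      = (Fintype.card F : ℝ) * (h u)^2
        - 2 * ((Fintype.card F : ℝ) * (h u * avg i h u))
        + ∑ c : F, (h (Function.update u i c))^2 := by
    intro u
    have e : ∀ c : F, (h u - h (Function.update u i c))^2
        = (h u)^2 - 2 * (h u * h (Function.update u i c))
          + (h (Function.update u i c))^2 := by intro c; ring
    rw [Finset.sum_congr rfl (fun c _ => e c), Finset.sum_add_distrib,
      Finset.sum_sub_distrib]
    have e2 : (∑ c : F, h (Function.update u i c)) = (Fintype.card F : ℝ) * avg i h u := by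
      rw [avg]; field_simp
    simp only [← Finset.mul_sum, e2, Finset.sum_const, Finset.card_univ, nsmul_eq_mul]
    ring
  rw [Finset.sum_congr rfl (fun u _ => expand u), Finset.sum_add_distrib,
    Finset.sum_sub_distrib, ← Finset.mul_sum, ← Finset.mul_sum, ← Finset.mul_sum,
    sum_avg_mul_self i h, sum_update i (fun u => (h u)^2)]
  ring

/-- the sharp Poincaré inequality for sums over `F_q^m` -/
lemma key_sums [AddGroup F] (hm : 0 < m) (hq : 0 < Fintype.card F)
    (h : (Fin m → F) → ℝ) :
    ∑ u : Fin m → F, ∑ v : Fin m → F, (h u - h v)^2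
      ≤ (Fintype.card F : ℝ)^(m-1) *
          ∑ u : Fin m → F, ∑ i : Fin m, ∑ x : F,
            (h u - h (Function.update u i (u i + x)))^2 := by
  have hqr : (0:ℝ) < (Fintype.card F : ℝ) := by exact_mod_cast hq
  have hN : Fintype.card (Fin m → F) = Fintype.card F ^ m := by
    rw [Fintype.card_fun, Fintype.card_fin]
  have hNr : (0:ℝ) < (Fintype.card (Fin m → F) : ℝ) := by
    rw [hN]; positivity
  -- LHS
  have lhs_eq : ∑ u : Fin m → F, ∑ v : Fin m → F, (h u - h v)^2
      = 2 * (Fintype.card (Fin m → F) : ℝ) * (∑ u : Fin m → F, (h u)^2)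
        - 2 * (∑ u : Fin m → F, h u)^2 := by
    have e : ∀ u : Fin m → F, ∑ v : Fin m → F, (h u - h v)^2
        = (Fintype.card (Fin m → F) : ℝ) * (h u)^2
          - 2 * (h u * ∑ v : Fin m → F, h v) + ∑ v : Fin m → F, (h v)^2 := by
      intro u
      have e' : ∀ v : Fin m → F, (h u - h v)^2
          = (h u)^2 - 2 * (h u * h v) + (h v)^2 := by intro v; ring
      rw [Finset.sum_congr rfl (fun v _ => e' v), Finset.sum_add_distrib,
        Finset.sum_sub_distrib]
      simp only [← Finset.mul_sum, Finset.sum_const, Finset.card_univ, nsmul_eq_mul]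
    rw [Finset.sum_congr rfl (fun u _ => e u), Finset.sum_add_distrib,
      Finset.sum_sub_distrib]
    simp only [← Finset.mul_sum, ← Finset.sum_mul, Finset.sum_const, Finset.card_univ,
      nsmul_eq_mul]
    ring
  -- RHS inner
  have rhs_eq : ∑ u : Fin m → F, ∑ i : Fin m, ∑ x : F,
        (h u - h (Function.update u i (u i + x)))^2
      = 2 * (Fintype.card F : ℝ) *
          ∑ i : Fin m, (∑ u : Fin m → F, (h u)^2 - ∑ u : Fin m → F, (avg i h u)^2) := by
    rw [Finset.sum_comm]
    rw [Finset.sum_congr rfl (fun i (_ : i ∈ Finset.univ) => by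
      rw [Finset.sum_congr rfl (fun u (_ : u ∈ Finset.univ) => sum_edge i h u),
        sum_edge_total i h] :
      ∀ i ∈ Finset.univ, (∑ u : Fin m → F, ∑ x : F,
          (h u - h (Function.update u i (u i + x)))^2)
        = 2 * (Fintype.card F : ℝ) *
            (∑ u : Fin m → F, (h u)^2 - ∑ u : Fin m → F, (avg i h u)^2))]
    rw [← Finset.mul_sum]
  rw [lhs_eq, rhs_eq]
  have kn := key_normalized h hq
  have pow_eq : (Fintype.card F : ℝ)^(m-1) * (2 * (Fintype.card F : ℝ))
      = 2 * (Fintype.card (Fin m → F) : ℝ) := by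
    rw [hN]
    push_cast
    rw [← mul_assoc, mul_comm ((Fintype.card F : ℝ)^(m-1)) 2, mul_assoc,
      ← pow_succ, Nat.sub_add_cancel hm]
  calc 2 * (Fintype.card (Fin m → F) : ℝ) * (∑ u : Fin m → F, (h u)^2)
        - 2 * (∑ u : Fin m → F, h u)^2
      = 2 * (Fintype.card (Fin m → F) : ℝ) *
          (∑ u : Fin m → F, (h u)^2
            - (∑ u : Fin m → F, h u)^2 / (Fintype.card (Fin m → F) : ℝ)) := by
        field_simp
    _ ≤ 2 * (Fintype.card (Fin m → F) : ℝ) *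
          ∑ i : Fin m, (∑ u : Fin m → F, (h u)^2 - ∑ u : Fin m → F, (avg i h u)^2) := by
        have h2N : (0:ℝ) ≤ 2 * (Fintype.card (Fin m → F) : ℝ) := by positivity
        exact mul_le_mul_of_nonneg_left kn h2N
    _ = (Fintype.card F : ℝ)^(m-1) *
          (2 * (Fintype.card F : ℝ) *
            ∑ i : Fin m, (∑ u : Fin m → F, (h u)^2 - ∑ u : Fin m → F, (avg i h u)^2)) := by
        rw [← mul_assoc, ← pow_eq]

end VarAux


namespace VarAux

variable {nA nB : ℕ}

lemma tensorApplyFst_mul (M N : Matrix (Fin nA) (Fin nA) ℂ) (ψ : Fin nA × Fin nB → ℂ) :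
    tensorApplyFst (M * N) ψ = tensorApplyFst M (tensorApplyFst N ψ) := by
  funext p
  simp only [tensorApplyFst, Matrix.mul_apply, Finset.sum_mul, Finset.mul_sum, mul_assoc]
  rw [Finset.sum_comm]

lemma tensorApplyFst_sub (M N : Matrix (Fin nA) (Fin nA) ℂ) (ψ : Fin nA × Fin nB → ℂ) :
    tensorApplyFst (M - N) ψ = fun p => tensorApplyFst M ψ p - tensorApplyFst N ψ p := by
  funext p
  simp [tensorApplyFst, Matrix.sub_apply, sub_mul, Finset.sum_sub_distrib]

def tripleSwap (nA nB : ℕ) : ((Fin nA × Fin nB) × Fin nA) ≃ ((Fin nA × Fin nB) × Fin nA) where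
  toFun x := ((x.2, x.1.2), x.1.1)
  invFun x := ((x.2, x.1.2), x.1.1)
  left_inv x := rfl
  right_inv x := rfl

lemma cInner_adjoint (M : Matrix (Fin nA) (Fin nA) ℂ) (φ χ : Fin nA × Fin nB → ℂ) :
    cInner φ (tensorApplyFst M χ) = cInner (tensorApplyFst M.conjTranspose φ) χ := by
  unfold cInner tensorApplyFst
  simp only [map_sum, map_mul, Finset.mul_sum, Finset.sum_mul]
  rw [Fintype.sum_prod_type, Fintype.sum_prod_type]
  have h := Equiv.sum_comp (tripleSwap nA nB) (fun x : (Fin nA × Fin nB) × Fin nA =>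
    ((starRingEnd ℂ) (M.conjTranspose x.1.1 x.2) * (starRingEnd ℂ) (φ (x.2, x.1.2))) * χ x.1)
  simp only [tripleSwap, Equiv.coe_fn_mk, Fintype.sum_prod_type] at h
  refine Eq.trans ?_ h
  refine Finset.sum_congr rfl fun a _ => Finset.sum_congr rfl fun s _ =>
    Finset.sum_congr rfl fun a' _ => ?_
  simp only [Matrix.conjTranspose_apply, starRingEnd_apply, star_star]
  ring

lemma quad_re (B : Matrix (Fin nA) (Fin nA) ℂ) (hB : B.IsHermitian)
    (ψ : Fin nA × Fin nB → ℂ) :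
    (cInner ψ (tensorApplyFst (B * B) ψ)).re
      = ∑ p : Fin nA × Fin nB,
          ((tensorApplyFst B ψ p).re ^ 2 + (tensorApplyFst B ψ p).im ^ 2) := by
  rw [tensorApplyFst_mul, cInner_adjoint, hB.eq]
  rw [cInner, Complex.re_sum]
  refine Finset.sum_congr rfl (fun p _ => ?_)
  simp [Complex.mul_re, Complex.conj_re, Complex.conj_im]
  ring

end VarAux


namespace VarAux

lemma sum3_comm {α β γ : Type*} [Fintype α] [Fintype β] [Fintype γ] (f : α → β → γ → ℝ) :
    ∑ a : α, ∑ b : β, ∑ c : γ, f a b c = ∑ c : γ, ∑ a : α, ∑ b : β, f a b c :=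
  calc ∑ a : α, ∑ b : β, ∑ c : γ, f a b c
      = ∑ a : α, ∑ c : γ, ∑ b : β, f a b c :=
        Finset.sum_congr rfl (fun a _ => Finset.sum_comm)
    _ = ∑ c : γ, ∑ a : α, ∑ b : β, f a b c := Finset.sum_comm

lemma sum4_comm {α β γ δ : Type*} [Fintype α] [Fintype β] [Fintype γ] [Fintype δ]
    (f : α → β → γ → δ → ℝ) :
    ∑ a : α, ∑ b : β, ∑ c : γ, ∑ d : δ, f a b c d
      = ∑ d : δ, ∑ a : α, ∑ b : β, ∑ c : γ, f a b c d :=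
  calc ∑ a : α, ∑ b : β, ∑ c : γ, ∑ d : δ, f a b c d
      = ∑ a : α, ∑ d : δ, ∑ b : β, ∑ c : γ, f a b c d :=
        Finset.sum_congr rfl (fun a _ => sum3_comm (fun b c d => f a b c d))
    _ = ∑ d : δ, ∑ a : α, ∑ b : β, ∑ c : γ, f a b c d := Finset.sum_comm

end VarAux

/-- local vs. global variance.  Let `ψ` be a vector in
`H_A ⊗ H_B` and, for each `u ∈ F_q^m`, let `A^u` be a Hermitian matrix with
`0 ≤ A^u ≤ I` acting on `H_A`.  Define the local variance
`Var_local = (1/2)·E_{(u,v)∼C} ⟨ψ|(A^u − A^v)² ⊗ I|ψ⟩` over a random hypercube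
edge (`v = u + x·e_i` with `u, i, x` uniform), and the global variance
`Var_global = (1/2)·E_{u,v} ⟨ψ|(A^u − A^v)² ⊗ I|ψ⟩` over two independent uniform
points.  Then `Var_global ≤ m · Var_local`. -/
theorem global_variance_le_local_variance (q m : ℕ) (hm : 0 < m)
    (F : Type*) [Field F] [Fintype F] [DecidableEq F]
    (hcard : Fintype.card F = q)
    (nA nB : ℕ) (ψ : Fin nA × Fin nB → ℂ)
    (A : (Fin m → F) → Matrix (Fin nA) (Fin nA) ℂ)
    (hpos : ∀ u, (A u).PosSemidef)
    (hle : ∀ u, ((1 : Matrix (Fin nA) (Fin nA) ℂ) - A u).PosSemidef) :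
    (1 / 2) *
        ((∑ u : Fin m → F, ∑ v : Fin m → F,
            (cInner ψ (tensorApplyFst ((A u - A v) * (A u - A v)) ψ)).re) /
          ((q : ℝ) ^ m * (q : ℝ) ^ m)) ≤
      (m : ℝ) * ((1 / 2) *
        ((∑ u : Fin m → F, ∑ i : Fin m, ∑ x : F,
            (cInner ψ
              (tensorApplyFst
                ((A u - A (Function.update u i (u i + x))) *
                  (A u - A (Function.update u i (u i + x)))) ψ)).re) /
          ((q : ℝ) ^ m * m * q))) := by
  have hq0 : 0 < Fintype.card F := Fintype.card_pos
  have hqn : 0 < q := hcard ▸ hq0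
  have hcR : (Fintype.card F : ℝ) = (q : ℝ) := by exact_mod_cast congrArg Nat.cast hcard
  have hqr : (0:ℝ) < (q:ℝ) := by exact_mod_cast hqn
  have hmr : (0:ℝ) < (m:ℝ) := by exact_mod_cast hm
  have hherm : ∀ u v : Fin m → F, (A u - A v).IsHermitian :=
    fun u v => ((hpos u).1).sub ((hpos v).1)
  have hterm : ∀ u v : Fin m → F,
      (cInner ψ (tensorApplyFst ((A u - A v) * (A u - A v)) ψ)).re
        = ∑ p : Fin nA × Fin nB,
            (((tensorApplyFst (A u) ψ p).re - (tensorApplyFst (A v) ψ p).re)^2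
              + ((tensorApplyFst (A u) ψ p).im - (tensorApplyFst (A v) ψ p).im)^2) := by
    intro u v
    rw [VarAux.quad_re _ (hherm u v) ψ]
    refine Finset.sum_congr rfl fun p _ => ?_
    rw [VarAux.tensorApplyFst_sub]
    simp [Complex.sub_re, Complex.sub_im]
  have key_p : ∀ p : Fin nA × Fin nB,
      ∑ u : Fin m → F, ∑ v : Fin m → F,
          (((tensorApplyFst (A u) ψ p).re - (tensorApplyFst (A v) ψ p).re)^2
            + ((tensorApplyFst (A u) ψ p).im - (tensorApplyFst (A v) ψ p).im)^2)
        ≤ (q:ℝ)^(m-1) * ∑ u : Fin m → F, ∑ i : Fin m, ∑ x : F,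
            (((tensorApplyFst (A u) ψ p).re
                - (tensorApplyFst (A (Function.update u i (u i + x))) ψ p).re)^2
              + ((tensorApplyFst (A u) ψ p).im
                - (tensorApplyFst (A (Function.update u i (u i + x))) ψ p).im)^2) := by
    intro p
    have kre := VarAux.key_sums hm hq0 (fun u => (tensorApplyFst (A u) ψ p).re)
    have kim := VarAux.key_sums hm hq0 (fun u => (tensorApplyFst (A u) ψ p).im)
    rw [hcR] at kre kim
    simp only [Finset.sum_add_distrib]
    rw [mul_add]
    exact add_le_add kre kim
  set SG := ∑ u : Fin m → F, ∑ v : Fin m → F,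
      (cInner ψ (tensorApplyFst ((A u - A v) * (A u - A v)) ψ)).re with hSG
  set SL := ∑ u : Fin m → F, ∑ i : Fin m, ∑ x : F,
      (cInner ψ (tensorApplyFst ((A u - A (Function.update u i (u i + x)))
        * (A u - A (Function.update u i (u i + x)))) ψ)).re with hSL
  have hSL' : SL = ∑ u : Fin m → F, ∑ i : Fin m, ∑ x : F, ∑ p : Fin nA × Fin nB,
      (((tensorApplyFst (A u) ψ p).re
          - (tensorApplyFst (A (Function.update u i (u i + x))) ψ p).re)^2
        + ((tensorApplyFst (A u) ψ p).im
          - (tensorApplyFst (A (Function.update u i (u i + x))) ψ p).im)^2) := by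
    rw [hSL]
    exact Finset.sum_congr rfl fun u _ => Finset.sum_congr rfl fun i _ =>
      Finset.sum_congr rfl fun x _ => hterm u (Function.update u i (u i + x))
  have main : SG ≤ (q:ℝ)^(m-1) * SL := by
    calc SG
        = ∑ u : Fin m → F, ∑ v : Fin m → F, ∑ p : Fin nA × Fin nB,
            (((tensorApplyFst (A u) ψ p).re - (tensorApplyFst (A v) ψ p).re)^2
              + ((tensorApplyFst (A u) ψ p).im - (tensorApplyFst (A v) ψ p).im)^2) := by
          rw [hSG]
          exact Finset.sum_congr rfl fun u _ => Finset.sum_congr rfl fun v _ => hterm u v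
      _ = ∑ p : Fin nA × Fin nB, ∑ u : Fin m → F, ∑ v : Fin m → F,
            (((tensorApplyFst (A u) ψ p).re - (tensorApplyFst (A v) ψ p).re)^2
              + ((tensorApplyFst (A u) ψ p).im - (tensorApplyFst (A v) ψ p).im)^2) :=
          VarAux.sum3_comm _
      _ ≤ ∑ p : Fin nA × Fin nB, (q:ℝ)^(m-1) *
            ∑ u : Fin m → F, ∑ i : Fin m, ∑ x : F,
              (((tensorApplyFst (A u) ψ p).re
                  - (tensorApplyFst (A (Function.update u i (u i + x))) ψ p).re)^2
                + ((tensorApplyFst (A u) ψ p).im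
                  - (tensorApplyFst (A (Function.update u i (u i + x))) ψ p).im)^2) :=
          Finset.sum_le_sum fun p _ => key_p p
      _ = (q:ℝ)^(m-1) * ∑ p : Fin nA × Fin nB,
            ∑ u : Fin m → F, ∑ i : Fin m, ∑ x : F,
              (((tensorApplyFst (A u) ψ p).re
                  - (tensorApplyFst (A (Function.update u i (u i + x))) ψ p).re)^2
                + ((tensorApplyFst (A u) ψ p).im
                  - (tensorApplyFst (A (Function.update u i (u i + x))) ψ p).im)^2) :=
          (Finset.mul_sum _ _ _).symm
      _ = (q:ℝ)^(m-1) * SL := by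
          rw [hSL']
          congr 1
          exact (VarAux.sum4_comm (fun u i x p =>
            (((tensorApplyFst (A u) ψ p).re
                - (tensorApplyFst (A (Function.update u i (u i + x))) ψ p).re)^2
              + ((tensorApplyFst (A u) ψ p).im
                - (tensorApplyFst (A (Function.update u i (u i + x))) ψ p).im)^2))).symm
  have hpow : (q:ℝ)^(m-1) * (q:ℝ) = (q:ℝ)^m := by
    rw [← pow_succ]
    congr 1
    omega
  have e1 : (m:ℝ) * ((1/2) * (SL / ((q:ℝ)^m * (m:ℝ) * (q:ℝ))))
      = (1/2) * (SL / ((q:ℝ)^m * (q:ℝ))) := by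
    have h1 : ((q:ℝ)^m) ≠ 0 := by positivity
    have h2 : (m:ℝ) ≠ 0 := by positivity
    have h3 : (q:ℝ) ≠ 0 := by positivity
    field_simp
  rw [e1]
  have h12 : (0:ℝ) ≤ 1/2 := by norm_num
  refine mul_le_mul_of_nonneg_left ?_ h12
  rw [div_le_div_iff₀ (by positivity) (by positivity)]
  calc SG * ((q:ℝ)^m * (q:ℝ))
      ≤ ((q:ℝ)^(m-1) * SL) * ((q:ℝ)^m * (q:ℝ)) :=
        mul_le_mul_of_nonneg_right main (by positivity)
    _ = SL * (((q:ℝ)^(m-1) * (q:ℝ)) * (q:ℝ)^m) := by ring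
    _ = SL * ((q:ℝ)^m * (q:ℝ)^m) := by rw [hpow]
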